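/- Let G = ZM(m,n,r) with gcd(m,n) = gcd(m, r−1) = 1 and r^n ≡ 1 (mod m), and let d = o_m(r). Then G is a complete group (trivial center and all automorphisms inner) if and only if φ(m) = n = d. -/

import Mathlib

set_option linter.unusedSectionVars false

open Subgroup

section ZM
variable {G : Type*} [Group G] [Finite G] {m n r : ℕ} {a b : G}

lemma apow (ha : orderOf a = m) {i j : ℕ} (h : (i : ZMod m) = j) : a ^ i = a ^ j :=
  pow_eq_pow_iff_modEq.mpr (ha ▸ (ZMod.natCast_eq_natCast_iff _ _ _).mp h)

lemma apow_rev (ha : orderOf a = m) {i j : ℕ} (h : a ^ i = a ^ j) : (i : ZMod m) = j :=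
  (ZMod.natCast_eq_natCast_iff _ _ _).mpr (ha ▸ pow_eq_pow_iff_modEq.mp h)

lemma castsub1 (hm : 0 < m) : ((m - 1 : ℕ) : ZMod m) = -1 := by
  have h : ((m - 1 : ℕ) : ZMod m) + 1 = 0 := by
    have : ((m - 1 + 1 : ℕ) : ZMod m) = 0 := by
      rw [Nat.sub_add_cancel hm, ZMod.natCast_self]
    push_cast at this
    linear_combination this
  linear_combination h

lemma ainv (ha : orderOf a = m) (hm : 0 < m) (i : ℕ) : (a ^ i)⁻¹ = a ^ ((m - 1) * i) := by
  rw [eq_comm, eq_inv_iff_mul_eq_one, ← pow_add]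
  have : (((m - 1) * i + i : ℕ) : ZMod m) = ((0 : ℕ) : ZMod m) := by
    push_cast [castsub1 hm]
    ring
  rw [apow ha this, pow_zero]

-- conjugation by b
lemma c2 (ha : orderOf a = m) (hconj : b⁻¹ * a * b = a ^ r) :
    ∀ j k, (b ^ j)⁻¹ * a ^ k * b ^ j = a ^ (k * r ^ j) := by
  intro j
  induction j with
  | zero => intro k; simp
  | succ j ih =>
    intro k
    have h1 : b⁻¹ * a ^ k * b = a ^ (k * r) := by
      have := conj_pow (i := k) (a := b⁻¹) (b := a)
      rw [inv_inv] at this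
      rw [← this, hconj, ← pow_mul, mul_comm r k]
    calc (b ^ (j+1))⁻¹ * a ^ k * b ^ (j+1)
        = (b ^ j)⁻¹ * (b⁻¹ * a ^ k * b) * b ^ j := by rw [pow_succ]; group
      _ = (b ^ j)⁻¹ * a ^ (k * r) * b ^ j := by rw [h1]
      _ = a ^ (k * r * r ^ j) := ih (k * r)
      _ = a ^ (k * r ^ (j+1)) := by ring_nf

-- reverse conjugation: b * a^k * b⁻¹ = a^(k * r^(n-1))
lemma c3 (ha : orderOf a = m) (hconj : b⁻¹ * a * b = a ^ r) (hn : 0 < n)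
    (hrn : r ^ n ≡ 1 [MOD m]) :
    ∀ k, b * a ^ k * b⁻¹ = a ^ (k * r ^ (n - 1)) := by
  intro k
  have h1 : b⁻¹ * a ^ (k * r ^ (n-1)) * b = a ^ k := by
    have h2 := c2 ha hconj 1 (k * r ^ (n-1))
    rw [pow_one] at h2
    rw [h2]
    apply apow ha
    have hc : ((r ^ n : ℕ) : ZMod m) = ((1:ℕ) : ZMod m) := (ZMod.natCast_eq_natCast_iff _ _ _).mpr hrn
    push_cast at hc ⊢
    have : (r : ZMod m) ^ (n - 1) * r = (r : ZMod m) ^ n := by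
      rw [← pow_succ, Nat.sub_add_cancel hn]
    rw [pow_one, mul_assoc, this, hc, mul_one]
  rw [← h1]; group

lemma c4 (ha : orderOf a = m) (hconj : b⁻¹ * a * b = a ^ r) (hn : 0 < n)
    (hrn : r ^ n ≡ 1 [MOD m]) :
    ∀ j k, b ^ j * a ^ k * (b ^ j)⁻¹ = a ^ (k * (r ^ (n - 1)) ^ j) := by
  intro j
  induction j with
  | zero => intro k; simp
  | succ j ih =>
    intro k
    calc b ^ (j+1) * a ^ k * (b ^ (j+1))⁻¹
        = b ^ j * (b * a ^ k * b⁻¹) * (b ^ j)⁻¹ := by rw [pow_succ]; group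
      _ = b ^ j * a ^ (k * r ^ (n-1)) * (b ^ j)⁻¹ := by rw [c3 ha hconj hn hrn]
      _ = a ^ (k * r ^ (n-1) * (r ^ (n-1)) ^ j) := ih _
      _ = a ^ (k * (r ^ (n-1)) ^ (j+1)) := by ring_nf

-- swap forms
lemma swap (ha : orderOf a = m) (hconj : b⁻¹ * a * b = a ^ r) (hn : 0 < n)
    (hrn : r ^ n ≡ 1 [MOD m]) (j k : ℕ) :
    b ^ j * a ^ k = a ^ (k * (r ^ (n - 1)) ^ j) * b ^ j := by
  rw [← c4 ha hconj hn hrn j k]; group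

lemma PF (ha : orderOf a = m) (hconj : b⁻¹ * a * b = a ^ r) (hn : 0 < n)
    (hrn : r ^ n ≡ 1 [MOD m]) (i j k l : ℕ) :
    (a ^ i * b ^ j) * (a ^ k * b ^ l) = a ^ (i + k * (r ^ (n - 1)) ^ j) * b ^ (j + l) := by
  calc (a ^ i * b ^ j) * (a ^ k * b ^ l)
      = a ^ i * (b ^ j * a ^ k) * b ^ l := by group
    _ = a ^ i * (a ^ (k * (r ^ (n - 1)) ^ j) * b ^ j) * b ^ l := by
        rw [swap ha hconj hn hrn]
    _ = a ^ (i + k * (r ^ (n - 1)) ^ j) * b ^ (j + l) := by rw [pow_add, pow_add]; group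

end ZM

section ZM2
variable {G : Type*} [Group G] [Finite G] {m n r : ℕ} {a b : G}

lemma rep (ha : orderOf a = m) (hb : orderOf b = n) (hconj : b⁻¹ * a * b = a ^ r)
    (hm : 0 < m) (hn : 0 < n) (hrn : r ^ n ≡ 1 [MOD m])
    (hgen : Subgroup.closure {a, b} = ⊤) :
    ∀ g : G, ∃ i j : ℕ, g = a ^ i * b ^ j := by
  let S : Subgroup G :=
    { carrier := {g | ∃ i j : ℕ, g = a ^ i * b ^ j}
      one_mem' := ⟨0, 0, by simp⟩
      mul_mem' := by
        rintro x y ⟨i, j, rfl⟩ ⟨k, l, rfl⟩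
        exact ⟨_, _, (PF ha hconj hn hrn i j k l)⟩
      inv_mem' := by
        rintro x ⟨i, j, rfl⟩
        refine ⟨(m-1)*i * (r ^ (n-1)) ^ ((n-1)*j), (n-1)*j, ?_⟩
        rw [mul_inv_rev, ainv ha hm, ainv hb hn, swap ha hconj hn hrn] }
  have hab : Subgroup.closure {a, b} ≤ S := by
    rw [Subgroup.closure_le]
    rintro x (rfl | rfl)
    · exact ⟨1, 0, by simp⟩
    · exact ⟨0, 1, by simp⟩
  intro g
  exact hab (hgen ▸ Subgroup.mem_top g)

lemma uniq (ha : orderOf a = m) (hb : orderOf b = n)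
    (hm : 0 < m) (hn : 0 < n) (hmn : Nat.Coprime m n) {i j k l : ℕ}
    (h : a ^ i * b ^ j = a ^ k * b ^ l) :
    (i : ZMod m) = k ∧ (j : ZMod n) = l := by
  have hx : b ^ (j + l * (n-1)) = a ^ (i * (m-1) + k) := by
    calc b ^ (j + l * (n-1)) = a ^ (i * (m-1)) * ((a ^ i * b ^ j) * b ^ (l * (n-1))) := by
          have h0 : a ^ (i * (m-1) + i) = 1 := by
            rw [apow ha (i := i*(m-1)+i) (j := 0), pow_zero]
            push_cast [castsub1 hm]; ring
          symm
          calc a ^ (i * (m-1)) * ((a ^ i * b ^ j) * b ^ (l * (n-1)))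
              = (a ^ (i * (m-1)) * a ^ i) * (b ^ j * b ^ (l * (n-1))) := by group
            _ = a ^ (i * (m-1) + i) * b ^ (j + l * (n-1)) := by rw [← pow_add, ← pow_add]
            _ = b ^ (j + l * (n-1)) := by rw [h0, one_mul]
      _ = a ^ (i * (m-1)) * ((a ^ k * b ^ l) * b ^ (l * (n-1))) := by rw [h]
      _ = a ^ (i * (m-1) + k) := by
          rw [mul_assoc (a^k), ← pow_add]
          have : b ^ (l + l * (n-1)) = 1 := by
            rw [apow hb (i := l + l*(n-1)) (j := 0), pow_zero]
            push_cast [castsub1 hn]; ring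
          rw [this, mul_one, ← pow_add]
  set x := a ^ (i * (m-1) + k) with hxdef
  have h1 : orderOf x ∣ m := by
    apply orderOf_dvd_of_pow_eq_one
    rw [← pow_mul, mul_comm _ m, pow_mul, ← ha, pow_orderOf_eq_one, one_pow]
  have h2 : orderOf x ∣ n := by
    apply orderOf_dvd_of_pow_eq_one
    rw [← hx, ← pow_mul, mul_comm _ n, pow_mul, ← hb, pow_orderOf_eq_one, one_pow]
  have hx1 : x = 1 := orderOf_eq_one_iff.mp (Nat.eq_one_of_dvd_coprimes hmn h1 h2)
  constructor
  · have : a ^ (i * (m-1) + k) = a ^ (0 : ℕ) := by rw [← hxdef, hx1, pow_zero]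
    have hc := apow_rev ha this
    push_cast [castsub1 hm] at hc
    linear_combination -hc
  · have : b ^ (j + l * (n-1)) = b ^ (0 : ℕ) := by rw [hx, hx1, pow_zero]
    have hc := apow_rev hb this
    push_cast [castsub1 hn] at hc
    linear_combination hc

end ZM2

section ZM3
variable {G : Type*} [Group G] [Finite G] {m n r : ℕ} {a b : G}

lemma powform (ha : orderOf a = m) (hconj : b⁻¹ * a * b = a ^ r)
    (hn : 0 < n) (hrn : r ^ n ≡ 1 [MOD m]) (i j : ℕ) :
    ∀ k : ℕ, ∃ e : ℕ, (a ^ i * b ^ j) ^ k = a ^ e * b ^ (j * k) := by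
  intro k
  induction k with
  | zero => exact ⟨0, by simp⟩
  | succ k ih =>
    obtain ⟨e, he⟩ := ih
    refine ⟨e + i * (r ^ (n-1)) ^ (j * k), ?_⟩
    rw [pow_succ, he, PF ha hconj hn hrn, Nat.mul_add, Nat.mul_one]

lemma conja (ha : orderOf a = m) (hconj : b⁻¹ * a * b = a ^ r)
    (hn : 0 < n) (hrn : r ^ n ≡ 1 [MOD m]) (i j k : ℕ) :
    (a ^ i * b ^ j) * a ^ k * (a ^ i * b ^ j)⁻¹ = a ^ (k * (r ^ (n-1)) ^ j) := by
  have h := c4 ha hconj hn hrn j k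
  calc (a ^ i * b ^ j) * a ^ k * (a ^ i * b ^ j)⁻¹
      = a ^ i * (b ^ j * a ^ k * (b ^ j)⁻¹) * (a ^ i)⁻¹ := by group
    _ = a ^ i * a ^ (k * (r ^ (n-1)) ^ j) * (a ^ i)⁻¹ := by rw [h]
    _ = a ^ (k * (r ^ (n-1)) ^ j) := by
        rw [← pow_add, add_comm, pow_add, mul_assoc, mul_inv_cancel, mul_one]

lemma invconja (ha : orderOf a = m) (hconj : b⁻¹ * a * b = a ^ r) (i j k : ℕ) :
    (a ^ i * b ^ j)⁻¹ * a ^ k * (a ^ i * b ^ j) = a ^ (k * r ^ j) := by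
  have h := c2 ha hconj j k
  calc (a ^ i * b ^ j)⁻¹ * a ^ k * (a ^ i * b ^ j)
      = (b ^ j)⁻¹ * ((a ^ i)⁻¹ * a ^ k * a ^ i) * b ^ j := by group
    _ = (b ^ j)⁻¹ * a ^ k * b ^ j := by
        have h2 : (a ^ i)⁻¹ * a ^ k * a ^ i = a ^ k := by
          rw [mul_assoc, ← pow_add, add_comm, pow_add, ← mul_assoc, inv_mul_cancel, one_mul]
        rw [h2]
    _ = a ^ (k * r ^ j) := h

lemma conjb (ha : orderOf a = m) (hconj : b⁻¹ * a * b = a ^ r)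
    (hm : 0 < m) (hn : 0 < n) (hrn : r ^ n ≡ 1 [MOD m]) (i j : ℕ) :
    (a ^ i * b ^ j) * b * (a ^ i * b ^ j)⁻¹ = a ^ (i + ((m-1) * i) * r ^ (n-1)) * b := by
  have h := c3 ha hconj hn hrn ((m-1) * i)
  calc (a ^ i * b ^ j) * b * (a ^ i * b ^ j)⁻¹
      = a ^ i * (b ^ j * b * (b ^ j)⁻¹) * (a ^ i)⁻¹ := by group
    _ = a ^ i * b * (a ^ i)⁻¹ := by
        have h2 : b ^ j * b * (b ^ j)⁻¹ = b := by
          rw [← pow_succ, pow_succ', mul_assoc, mul_inv_cancel, mul_one]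
        rw [h2]
    _ = a ^ i * (b * a ^ ((m-1) * i) * b⁻¹) * b := by rw [ainv ha hm]; group
    _ = a ^ i * a ^ (((m-1) * i) * r ^ (n-1)) * b := by rw [h]
    _ = a ^ (i + ((m-1) * i) * r ^ (n-1)) * b := by rw [← pow_add]

end ZM3

section ZM4
variable {G : Type*} [Group G] [Finite G] {m n r : ℕ} {a b : G}

lemma exists_auto (ha : orderOf a = m) (hb : orderOf b = n) (hconj : b⁻¹ * a * b = a ^ r)
    (hm : 0 < m) (hn : 0 < n) (hmn : Nat.Coprime m n) (hrn : r ^ n ≡ 1 [MOD m])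
    (hgen : Subgroup.closure {a, b} = ⊤) (s : ℕ) (hs : Nat.Coprime s m) :
    ∃ E : G ≃* G, E a = a ^ s ∧ E b = b := by
  have : NeZero m := ⟨hm.ne'⟩
  choose I J hIJ using rep ha hb hconj hm hn hrn hgen
  set f : G → G := fun g => a ^ (s * I g) * b ^ (J g) with hf
  have key : ∀ i j : ℕ, f (a ^ i * b ^ j) = a ^ (s * i) * b ^ j := by
    intro i j
    obtain ⟨h1, h2⟩ := uniq ha hb hm hn hmn (hIJ (a ^ i * b ^ j)).symm
    rw [hf]
    simp only
    rw [apow ha (i := s * I (a ^ i * b ^ j)) (j := s * i) (by push_cast [← h1]; ring),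
      apow hb h2]
  have σmul : ∀ x y : G, f (x * y) = f x * f y := by
    intro x y
    have hxy : x * y = a ^ (I x + I y * (r ^ (n-1)) ^ (J x)) * b ^ (J x + J y) := by
      conv_lhs => rw [hIJ x, hIJ y]
      exact PF ha hconj hn hrn _ _ _ _
    have hfx : f x = a ^ (s * I x) * b ^ (J x) := rfl
    have hfy : f y = a ^ (s * I y) * b ^ (J y) := rfl
    rw [hxy, key, hfx, hfy, PF ha hconj hn hrn]
    congr 1
    apply apow ha
    push_cast; ring
  let F : G →* G := MonoidHom.mk' f σmul
  have hsurj : Function.Surjective F := by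
    intro g
    obtain ⟨i, j, rfl⟩ : ∃ i j : ℕ, g = a ^ i * b ^ j := ⟨I g, J g, hIJ g⟩
    set u := ZMod.unitOfCoprime s hs with hu
    set w : ZMod m := (↑(u⁻¹) : ZMod m) * (i : ZMod m) with hw
    refine ⟨a ^ w.val * b ^ j, ?_⟩
    have : F (a ^ w.val * b ^ j) = a ^ (s * w.val) * b ^ j := key _ _
    rw [this]
    congr 1
    apply apow ha
    push_cast
    have hcast : ((w.val : ℕ) : ZMod m) = w := by
      rw [ZMod.natCast_val, ZMod.cast_id]
    rw [hcast, hw, ← mul_assoc]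
    have : (s : ZMod m) = (u : ZMod m) := by rw [hu, ZMod.coe_unitOfCoprime]
    rw [this, ← Units.val_mul, mul_inv_cancel, Units.val_one, one_mul]
  have hinj : Function.Injective F := Finite.injective_iff_surjective.mpr hsurj
  refine ⟨MulEquiv.ofBijective F ⟨hinj, hsurj⟩, ?_, ?_⟩
  · show F a = a ^ s
    have h1 : a = a ^ 1 * b ^ 0 := by simp
    calc F a = F (a ^ 1 * b ^ 0) := by rw [← h1]
      _ = a ^ (s * 1) * b ^ 0 := key 1 0
      _ = a ^ s := by simp
  · show F b = b
    have h1 : b = a ^ 0 * b ^ 1 := by simp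
    calc F b = F (a ^ 0 * b ^ 1) := by rw [← h1]
      _ = a ^ (s * 0) * b ^ 1 := key 0 1
      _ = b := by simp

end ZM4

theorem ZM_complete_iff
    {G : Type*} [Group G] [Finite G] (m n r : ℕ) (a b : G)
    (hm : 0 < m) (hn : 0 < n) (hr : 0 < r)
    (ha : orderOf a = m) (hb : orderOf b = n)
    (hconj : b⁻¹ * a * b = a ^ r)
    (hgen : Subgroup.closure {a, b} = ⊤)
    (hmn : Nat.Coprime m n) (hmr : Nat.Coprime m (r - 1))
    (hrn : r ^ n ≡ 1 [MOD m])
    (d : ℕ) (hd : d = orderOf (r : ZMod m)) :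
    (Subgroup.center G = ⊥ ∧ ∀ φ : G ≃* G, ∃ g : G, φ = MulAut.conj g) ↔
      (Nat.totient m = n ∧ n = d) := by
  have hNm : NeZero m := ⟨hm.ne'⟩
  have hNn : NeZero n := ⟨hn.ne'⟩
  have hrep := rep ha hb hconj hm hn hrn hgen
  -- cast of r^n
  have hrn' : ((r : ZMod m)) ^ n = 1 := by
    have hc : ((r ^ n : ℕ) : ZMod m) = ((1 : ℕ) : ZMod m) :=
      (ZMod.natCast_eq_natCast_iff _ _ _).mpr hrn
    push_cast at hc
    exact hc
  -- r * r' = 1 in ZMod m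
  have hrcast : (r : ZMod m) * ((r ^ (n-1) : ℕ) : ZMod m) = 1 := by
    push_cast
    rw [← pow_succ', Nat.sub_add_cancel hn]
    exact hrn'
  have hrunit : IsUnit (r : ZMod m) := IsUnit.of_mul_eq_one _ hrcast
  have hr'unit : IsUnit (((r ^ (n-1) : ℕ)) : ZMod m) :=
    IsUnit.of_mul_eq_one _ (by rw [mul_comm]; exact hrcast)
  -- the unit r-hat
  set ru : (ZMod m)ˣ := hrunit.unit with hru
  have hrucoe : (ru : ZMod m) = r := hrunit.unit_spec
  have hruord : orderOf ru = d := by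
    rw [hd, ← hrucoe, orderOf_units]
  -- 1 - r' is a unit
  have hone_sub_unit : IsUnit (1 - ((r ^ (n-1) : ℕ) : ZMod m)) := by
    have hsub : ((r - 1 : ℕ) : ZMod m) = (r : ZMod m) - 1 := by
      push_cast [Nat.cast_sub hr]
      ring
    have h1 : (((r ^ (n-1) : ℕ)) : ZMod m) * ((r - 1 : ℕ) : ZMod m)
        = 1 - ((r ^ (n-1) : ℕ) : ZMod m) := by
      rw [hsub, mul_sub, mul_one, mul_comm _ (r : ZMod m), hrcast]
    have h2 : IsUnit ((r - 1 : ℕ) : ZMod m) :=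
      (ZMod.isUnit_iff_coprime _ _).mpr hmr.symm
    rw [← h1]
    exact hr'unit.mul h2
  -- d ∣ n
  have hdn : d ∣ n := hd ▸ orderOf_dvd_of_pow_eq_one hrn'
  -- b^d is central
  have hbd_center : b ^ d ∈ Subgroup.center G := by
    rw [Subgroup.mem_center_iff]
    intro g
    obtain ⟨i, j, rfl⟩ := hrep g
    have hr'd : ((((r ^ (n-1)) ^ d : ℕ)) : ZMod m) = 1 := by
      push_cast
      rw [← pow_mul, mul_comm (n-1) d, pow_mul]
      have : (r : ZMod m) ^ d = 1 := by rw [hd]; exact pow_orderOf_eq_one _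
      rw [this, one_pow]
    calc (a ^ i * b ^ j) * b ^ d = a ^ i * b ^ (j + d) := by rw [mul_assoc, ← pow_add]
      _ = a ^ (i * (r ^ (n-1)) ^ d) * b ^ (d + j) := by
          rw [add_comm j d]
          congr 1
          apply apow ha
          push_cast [hr'd]
          ring
      _ = (b ^ d * a ^ i) * b ^ j := by rw [swap ha hconj hn hrn, mul_assoc, ← pow_add]
      _ = b ^ d * (a ^ i * b ^ j) := by group
  constructor
  · -- complete → totient m = n ∧ n = d
    rintro ⟨hcenter, hinner⟩
    -- n = d
    have hnd : n = d := by
      have h1 : b ^ d = 1 := by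
        have := hcenter ▸ hbd_center
        simpa using this
      have h2 : n ∣ d := hb ▸ orderOf_dvd_of_pow_eq_one h1
      exact Nat.dvd_antisymm h2 hdn
    -- every unit is a power of ru
    have hall : ∀ u : (ZMod m)ˣ, u ∈ Subgroup.zpowers ru := by
      intro u
      set s : ℕ := (u : ZMod m).val with hs
      have hscop : Nat.Coprime s m := ZMod.val_coe_unit_coprime u
      have hscast : ((s : ℕ) : ZMod m) = (u : ZMod m) := by
        rw [hs, ZMod.natCast_val, ZMod.cast_id]
      obtain ⟨E, hEa, hEb⟩ := exists_auto ha hb hconj hm hn hmn hrn hgen s hscop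
      obtain ⟨g0, hg0⟩ := hinner E
      obtain ⟨i, j, hg0'⟩ := hrep g0
      -- E b = b gives conj g0 b = b
      have hcb : g0 * b * g0⁻¹ = b := by
        have := hEb
        rw [hg0] at this
        simpa [MulAut.conj_apply] using this
      have hi0 : (i : ZMod m) = 0 := by
        rw [hg0', conjb ha hconj hm hn hrn] at hcb
        have huq : a ^ (i + ((m-1) * i) * r ^ (n-1)) * b ^ 1 = a ^ 0 * b ^ 1 := by
          simpa using hcb
        have := (uniq ha hb hm hn hmn huq).1
        push_cast [castsub1 hm] at this
        have hfactor : (i : ZMod m) * (1 - ((r ^ (n-1) : ℕ) : ZMod m)) = 0 := by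
          push_cast
          linear_combination this
        exact (hone_sub_unit.mul_left_eq_zero).mp hfactor
      -- E a = a^s gives s = r'^j
      have hca : g0 * a * g0⁻¹ = a ^ s := by
        have := hEa
        rw [hg0] at this
        simpa [MulAut.conj_apply] using this
      have hsval : ((s : ℕ) : ZMod m) = ((((r ^ (n-1)) ^ j : ℕ)) : ZMod m) := by
        rw [hg0'] at hca
        have h1 : (a ^ i * b ^ j) * a ^ 1 * (a ^ i * b ^ j)⁻¹ = a ^ (1 * (r ^ (n-1)) ^ j) :=
          conja ha hconj hn hrn i j 1
        rw [pow_one] at h1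
        rw [h1, one_mul] at hca
        exact (apow_rev ha hca.symm)
      -- u = ru ^ ((n-1)*j)
      have hu : u = ru ^ ((n-1) * j) := by
        apply Units.ext
        push_cast [hrucoe]
        rw [← hscast, hsval]
        push_cast
        rw [← pow_mul]
      rw [hu]
      exact ⟨((n-1) * j : ℕ), by push_cast; rfl⟩
    have htop : Subgroup.zpowers ru = ⊤ := by
      rw [eq_top_iff]
      exact fun u _ => hall u
    have hcard : Nat.totient m = d := by
      have h1 : Nat.card (ZMod m)ˣ = Nat.totient m := by
        simp [Nat.card_eq_fintype_card, ZMod.card_units_eq_totient]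
      have h2 : Nat.card (Subgroup.zpowers ru) = d := by rw [Nat.card_zpowers, hruord]
      rw [htop, Subgroup.card_top] at h2
      rw [← h1, ← h2]
    exact ⟨by rw [hcard, hnd], hnd⟩
  · -- totient m = n ∧ n = d → complete
    rintro ⟨htot, hnd⟩
    have hruord' : orderOf ru = n := by rw [hruord, ← hnd]
    have hr'm1_unit : IsUnit (((r ^ (n-1) : ℕ) : ZMod m) - 1) := by
      have : (((r ^ (n-1) : ℕ) : ZMod m) - 1) = -(1 - ((r ^ (n-1) : ℕ) : ZMod m)) := by ring
      rw [this]
      exact hone_sub_unit.neg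
    have htopu : Subgroup.zpowers ru = ⊤ := by
      apply Subgroup.eq_top_of_card_eq
      rw [Nat.card_zpowers, hruord', ← htot]
      simp [Nat.card_eq_fintype_card, ZMod.card_units_eq_totient]
    constructor
    · -- center is trivial
      rw [eq_bot_iff]
      intro g hg
      obtain ⟨i, j, rfl⟩ := hrep g
      have hcomm := Subgroup.mem_center_iff.mp hg
      -- commute with b forces i = 0
      have hib : b * (a ^ i * b ^ j) = (a ^ i * b ^ j) * b := hcomm b
      have hi0 : (i : ZMod m) = 0 := by
        have h1 : b ^ 1 * a ^ i = a ^ (i * (r ^ (n-1)) ^ 1) * b ^ 1 := swap ha hconj hn hrn 1 i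
        rw [pow_one, pow_one] at h1
        have h2 : a ^ (i * r ^ (n-1)) * b ^ (1 + j) = a ^ i * b ^ (j + 1) := by
          calc a ^ (i * r ^ (n-1)) * b ^ (1 + j) = (a ^ (i * r ^ (n-1)) * b) * b ^ j := by
                rw [pow_add, pow_one]; group
            _ = (b * a ^ i) * b ^ j := by rw [← h1]
            _ = b * (a ^ i * b ^ j) := by group
            _ = (a ^ i * b ^ j) * b := hib
            _ = a ^ i * b ^ (j + 1) := by rw [pow_succ]; group
        have := (uniq ha hb hm hn hmn h2).1
        have hfactor : (i : ZMod m) * (((r ^ (n-1) : ℕ) : ZMod m) - 1) = 0 := by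
          push_cast at this ⊢
          linear_combination this
        exact (hr'm1_unit.mul_left_eq_zero).mp hfactor
      have hai : a ^ i = 1 := by
        rw [apow ha (j := 0) (by simpa using hi0), pow_zero]
      rw [hai, one_mul] at hg hcomm ⊢
      -- commute with a forces n ∣ j
      have hja : a * b ^ j = b ^ j * a := hcomm a
      have h1 : b ^ j * a ^ 1 = a ^ (1 * (r ^ (n-1)) ^ j) * b ^ j := swap ha hconj hn hrn j 1
      rw [pow_one, one_mul] at h1
      have h2 : a ^ 1 * b ^ j = a ^ ((r ^ (n-1)) ^ j) * b ^ j := by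
        rw [pow_one, hja, h1]
      have h3 : ((1 : ℕ) : ZMod m) = (((r ^ (n-1)) ^ j : ℕ) : ZMod m) :=
        (uniq ha hb hm hn hmn h2).1
      -- so ru^((n-1)*j) = 1, hence n ∣ (n-1)*j, hence n ∣ j
      have h4 : ru ^ ((n-1) * j) = 1 := by
        apply Units.ext
        push_cast [hrucoe]
        rw [pow_mul]
        push_cast at h3
        exact h3.symm
      have h5 : n ∣ (n-1) * j := by
        have := orderOf_dvd_of_pow_eq_one h4
        rwa [hruord'] at this
      have h6 : n ∣ j := by
        have hcop : Nat.Coprime n (n-1) := by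
          have hdvd := Nat.dvd_sub (Nat.gcd_dvd_left n (n-1)) (Nat.gcd_dvd_right n (n-1))
          have hone : n - (n-1) = 1 := by omega
          rw [hone] at hdvd
          exact Nat.dvd_one.mp hdvd
        exact hcop.dvd_of_dvd_mul_left h5
      have : b ^ j = 1 := by
        obtain ⟨c, rfl⟩ := h6
        rw [pow_mul, ← hb, pow_orderOf_eq_one, one_pow]
      rw [this]
      exact Subgroup.one_mem ⊥
    · -- all automorphisms are inner
      intro φ
      -- φ a = a ^ s
      obtain ⟨I', J', hφa⟩ := hrep (φ a)
      have hφaord : orderOf (φ a) = m := by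
        rw [← ha]
        exact orderOf_injective φ.toMonoidHom φ.injective a
      have hφam : (φ a) ^ m = 1 := by
        rw [← hφaord]
        exact pow_orderOf_eq_one _
      obtain ⟨e, he⟩ := powform ha hconj hn hrn I' J' m
      have hJ'0 : (J' : ZMod n) = 0 := by
        have h1 : a ^ e * b ^ (J' * m) = a ^ 0 * b ^ 0 := by
          rw [← he, ← hφa]
          simpa using hφam
        have h2 := (uniq ha hb hm hn hmn h1).2
        push_cast at h2
        have hmunit : IsUnit (m : ZMod n) := (ZMod.isUnit_iff_coprime _ _).mpr hmn
        exact (hmunit.mul_left_eq_zero).mp h2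
      set s := I' with hsdef
      have hφas : φ a = a ^ s := by
        rw [hφa, apow hb (j := 0) (by simpa using hJ'0), pow_zero, mul_one]
      -- s is a unit mod m
      have hscop : Nat.Coprime m s := by
        have h1 : orderOf (a ^ s) = m := by rw [← hφas, hφaord]
        have h2 : orderOf (a ^ s) = orderOf a / Nat.gcd (orderOf a) s := orderOf_pow a
        rw [h1, ha] at h2
        rcases (Nat.div_eq_self.mp h2.symm) with h | h
        · omega
        · exact h
      have hsunit : IsUnit (s : ZMod m) := (ZMod.isUnit_iff_coprime _ _).mpr hscop.symm
      -- φ b = a^i * b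
      obtain ⟨i, j, hφb⟩ := hrep (φ b)
      have hrel : (φ b)⁻¹ * (φ a) * (φ b) = (φ a) ^ r := by
        rw [← map_inv, ← map_mul, ← map_mul, hconj, map_pow]
      have hjb : (j : ZMod n) = 1 := by
        rw [hφas, hφb, invconja ha hconj, ← pow_mul] at hrel
        have h1 := apow_rev ha hrel
        push_cast at h1
        have h2 : (ru : ZMod m) ^ j = (ru : ZMod m) ^ 1 := by
          rw [hrucoe, pow_one]
          exact hsunit.mul_left_cancel (by rw [h1])
        have h3 : ru ^ j = ru ^ 1 := Units.ext (by push_cast; exact h2)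
        have h4 : j ≡ 1 [MOD n] := hruord' ▸ pow_eq_pow_iff_modEq.mp h3
        simpa using (ZMod.natCast_eq_natCast_iff _ _ _).mpr h4
      have hφb' : φ b = a ^ i * b := by
        rw [hφb, apow hb (j := 1) (by simpa using hjb), pow_one]
      -- get k with r^k = s mod m
      have hsumem : hsunit.unit ∈ Submonoid.powers ru := by
        rw [mem_powers_iff_mem_zpowers, htopu]
        trivial
      obtain ⟨k, hk⟩ := hsumem
      have hks : ((r ^ k : ℕ) : ZMod m) = (s : ZMod m) := by
        have := congrArg (Units.val) hk
        push_cast [hrucoe] at this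
        push_cast
        rw [this, IsUnit.unit_spec]
      -- choose t with t(1-r') = i mod m
      have hw : ∃ t : ℕ, ((t : ℕ) : ZMod m) = ((hone_sub_unit.unit⁻¹ : (ZMod m)ˣ) : ZMod m) * (i : ZMod m) :=
        ⟨(((hone_sub_unit.unit⁻¹ : (ZMod m)ˣ) : ZMod m) * (i : ZMod m)).val,
          by rw [ZMod.natCast_val, ZMod.cast_id]⟩
      obtain ⟨t, htcast⟩ := hw
      -- conj g0A a = a^s
      have hc1 : (a ^ t * b ^ ((n-1) * k)) * a * (a ^ t * b ^ ((n-1) * k))⁻¹ = a ^ s := by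
        have hcj := conja ha hconj hn hrn t ((n-1) * k) 1
        rw [pow_one, one_mul] at hcj
        rw [hcj]
        apply apow ha
        have hmod : (n-1) * ((n-1) * k) ≡ k [MOD n] := by
          apply (ZMod.natCast_eq_natCast_iff _ _ _).mp
          push_cast [castsub1 hn]
          ring
        have hpow : ru ^ ((n-1) * ((n-1) * k)) = ru ^ k := by
          apply pow_eq_pow_iff_modEq.mpr
          rw [hruord']
          exact hmod
        have hval := congrArg Units.val hpow
        push_cast [hrucoe] at hval
        push_cast
        rw [← pow_mul, hval]
        push_cast at hks
        exact hks
      have hc2 : (a ^ t * b ^ ((n-1) * k)) * b * (a ^ t * b ^ ((n-1) * k))⁻¹ = a ^ i * b := by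
        rw [conjb ha hconj hm hn hrn]
        congr 1
        apply apow ha
        have hv := hone_sub_unit.unit_spec
        have hinv : ((hone_sub_unit.unit⁻¹ : (ZMod m)ˣ) : ZMod m) *
            ((hone_sub_unit.unit : (ZMod m)ˣ) : ZMod m) = 1 := by
          rw [← Units.val_mul, inv_mul_cancel, Units.val_one]
        rw [Nat.cast_add, Nat.cast_mul, Nat.cast_mul, castsub1 hm, htcast]
        linear_combination (i : ZMod m) * hinv -
          (((hone_sub_unit.unit⁻¹ : (ZMod m)ˣ) : ZMod m) * (i : ZMod m)) * hv
      refine ⟨a ^ t * b ^ ((n-1) * k), ?_⟩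
      have hle : Subgroup.closure {a, b} ≤ φ.toMonoidHom.eqLocus (MulAut.conj (a ^ t * b ^ ((n-1) * k))).toMonoidHom := by
          rw [Subgroup.closure_le]
          rintro x hx
          simp only [Set.mem_insert_iff, Set.mem_singleton_iff] at hx
          rcases hx with hx | hx
          · rw [hx]
            show φ a = MulAut.conj (a ^ t * b ^ ((n-1) * k)) a
            rw [hφas, MulAut.conj_apply, hc1]
          · rw [hx]
            show φ b = MulAut.conj (a ^ t * b ^ ((n-1) * k)) b
            rw [hφb', MulAut.conj_apply, hc2]
      rw [hgen] at hle
      ext x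
      exact hle (Subgroup.mem_top x)
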